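/- Let d, k, m be integers satisfying k, m ≥ d ≥ 2, and let n ≥ 1. Let X be a set with kn elements and let X = X₁ ∪ X₂ ∪ … ∪ X_m be an m-coloring of X. Then X admits a partition into n pairwise disjoint d-colorful k-tuples (i.e., a partition of X into n subsets, each of size k and each containing elements from at least d distinct color classes) if and only if for every t ∈ {1, …, d−1} and every subset I ⊆ {1, …, m} with |I| = t, we have Σ_{i∈I} |X_i| ≤ (k−d+t)n. -/

import Mathlib

private lemma take_map_sum_eq {β : Type*} (f : β → ℕ) (c0 : β) :
    ∀ (cs : List β) (q : ℕ), q ≤ cs.length →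
      ((cs.take q).map f).sum = ∑ i ∈ Finset.range q, f (cs.getD i c0) := by
  intro cs
  induction cs with
  | nil =>
    intro q hq
    simp only [List.length_nil, Nat.le_zero] at hq
    simp [hq]
  | cons c cs ih =>
    intro q hq
    cases q with
    | zero => simp
    | succ q =>
      rw [List.take_succ_cons, List.map_cons, List.sum_cons,
        ih q (by simpa using hq), Finset.sum_range_succ']
      simp [List.getD_cons_succ, List.getD_cons_zero, add_comm]

private lemma mem_block_aux {α β : Type*} (g : β → List α) (x₀ : α) :
    ∀ (cs : List β) (p : ℕ), p < (cs.flatMap g).length →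
      ∃ (q : ℕ) (hq : q < cs.length),
        ((cs.take q).map fun c => (g c).length).sum ≤ p ∧
        p < ((cs.take q).map fun c => (g c).length).sum + (g (cs.get ⟨q, hq⟩)).length ∧
        (cs.flatMap g).getD p x₀ ∈ g (cs.get ⟨q, hq⟩) := by
  intro cs
  induction cs with
  | nil => intro p hp; simp at hp
  | cons c cs ih =>
    intro p hp
    rw [List.flatMap_cons, List.length_append] at hp
    by_cases h : p < (g c).length
    · refine ⟨0, by simp, by simp, by simpa using h, ?_⟩
      rw [List.flatMap_cons, List.getD_append _ _ _ _ h, List.getD_eq_get _ _ ⟨_, h⟩]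
      exact List.get_mem _ _
    · push_neg at h
      obtain ⟨q, hq, h1, h2, h3⟩ := ih (p - (g c).length) (by omega)
      refine ⟨q + 1, by simpa using hq, ?_, ?_, ?_⟩
      · rw [List.take_succ_cons, List.map_cons, List.sum_cons]
        omega
      · rw [List.take_succ_cons, List.map_cons, List.sum_cons]
        have he : (c :: cs).get ⟨q + 1, by simpa using hq⟩ = cs.get ⟨q, hq⟩ := rfl
        rw [he]
        omega
      · rw [List.flatMap_cons, List.getD_append_right _ _ _ _ h]
        exact h3

private lemma exists_col_in_window (s n j : ℕ) (hn : 0 < n) (hj : j < n) :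
    ∃ l : ℕ, s ≤ l * n + j ∧ l * n + j < s + n := by
  obtain ⟨A, hA⟩ : ∃ A, A = n * ((s + n - 1 - j) / n) := ⟨_, rfl⟩
  have hdm := Nat.div_add_mod (s + n - 1 - j) n
  have hmod : (s + n - 1 - j) % n < n := Nat.mod_lt _ hn
  rw [← hA] at hdm
  refine ⟨(s + n - 1 - j) / n, ?_, ?_⟩ <;> rw [mul_comm, ← hA] <;> omega

theorem hall_type_condition_for_colorful_partition
    {α : Type*} [DecidableEq α] (d k m n : ℕ)
    (hd : 2 ≤ d) (hk : d ≤ k) (hm : d ≤ m) (hn : 1 ≤ n)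
    (X : Finset α) (C : Fin m → Finset α)
    (hdisj : ∀ i j : Fin m, i ≠ j → Disjoint (C i) (C j))
    (hunion : Finset.univ.biUnion C = X)
    (hcard : X.card = k * n) :
    (∃ P : Fin n → Finset α,
        (∀ i j, i ≠ j → Disjoint (P i) (P j)) ∧
        Finset.univ.biUnion P = X ∧
        (∀ i, (P i).card = k) ∧
        (∀ i, d ≤ (Finset.univ.filter (fun c : Fin m => ((P i) ∩ C c).Nonempty)).card))
    ↔ (∀ t : ℕ, 1 ≤ t → t ≤ d - 1 → ∀ I : Finset (Fin m), I.card = t →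
        ∑ i ∈ I, (C i).card ≤ (k - d + t) * n) := by
  classical
  have hn0 : 0 < n := hn
  have hX0 : 0 < X.card := by
    rw [hcard]; exact Nat.mul_pos (by omega) hn0
  obtain ⟨x₀, hx₀X⟩ := Finset.card_pos.mp hX0
  have hcolu : ∀ (x : α) (c c' : Fin m), x ∈ C c → x ∈ C c' → c = c' := by
    intro x c c' h h'
    by_contra hne
    exact (Finset.disjoint_left.mp (hdisj c c' hne) h) h'
  constructor
  · -- forward direction
    rintro ⟨P, hPdisj, hPunion, hPcard, hPcol⟩ t ht htd I hI
    have hUcard : (I.biUnion C).card = ∑ i ∈ I, (C i).card :=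
      Finset.card_biUnion (fun x _ y _ hxy => hdisj x y hxy)
    have hUX : I.biUnion C ⊆ X := by
      rw [← hunion]
      exact Finset.biUnion_subset_biUnion_of_subset_left C (Finset.subset_univ I)
    have hUsplit : I.biUnion C = Finset.univ.biUnion (fun i => I.biUnion C ∩ P i) := by
      rw [← Finset.inter_biUnion, hPunion, Finset.inter_eq_left.mpr hUX]
    have hcard2 : (I.biUnion C).card = ∑ i : Fin n, (I.biUnion C ∩ P i).card := by
      conv_lhs => rw [hUsplit]
      exact Finset.card_biUnion (fun x _ y _ hxy =>
        Disjoint.mono Finset.inter_subset_right Finset.inter_subset_right (hPdisj x y hxy))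
    have hbound : ∀ i : Fin n, (I.biUnion C ∩ P i).card ≤ k - d + t := by
      intro i
      set D := Finset.univ.filter (fun c : Fin m => ((P i) ∩ C c).Nonempty) with hD
      have hDd : d ≤ D.card := hPcol i
      -- injection from D \ I into P i \ I.biUnion C
      have hinj : (D \ I).card ≤ (P i \ I.biUnion C).card := by
        apply Finset.card_le_card_of_injOn
          (fun c => if h : ((P i) ∩ C c).Nonempty then h.choose else x₀)
        · intro c hc
          obtain ⟨hcD, hcI⟩ := Finset.mem_sdiff.mp hc
          have h : ((P i) ∩ C c).Nonempty := (Finset.mem_filter.mp hcD).2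
          simp only [dif_pos h]
          have hch := h.choose_spec
          obtain ⟨h1, h2⟩ := Finset.mem_inter.mp hch
          refine Finset.mem_sdiff.mpr ⟨h1, ?_⟩
          intro hmem
          obtain ⟨c', hc'I, hc'⟩ := Finset.mem_biUnion.mp hmem
          exact hcI (hcolu _ c c' h2 hc' ▸ hc'I)
        · intro c hc c' hc' he
          simp only [Finset.coe_sdiff, Set.mem_diff, Finset.mem_coe] at hc hc'
          have h : ((P i) ∩ C c).Nonempty := (Finset.mem_filter.mp hc.1).2
          have h' : ((P i) ∩ C c').Nonempty := (Finset.mem_filter.mp hc'.1).2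
          simp only [dif_pos h, dif_pos h'] at he
          have h2 := (Finset.mem_inter.mp h.choose_spec).2
          have h2' := (Finset.mem_inter.mp h'.choose_spec).2
          rw [he] at h2
          exact hcolu _ c c' h2 h2'
      have hsd : t ≤ D.card → D.card - t ≤ (D \ I).card := by
        intro _
        have := Finset.le_card_sdiff I D
        omega
      have hsplit := Finset.card_inter_add_card_sdiff (P i) (I.biUnion C)
      rw [hPcard i] at hsplit
      have hIc : I.card = t := hI
      have hle := Finset.le_card_sdiff I D
      rw [Finset.inter_comm]
      omega
    rw [← hUcard, hcard2]
    calc ∑ i : Fin n, (I.biUnion C ∩ P i).card ≤ ∑ _i : Fin n, (k - d + t) :=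
          Finset.sum_le_sum (fun i _ => hbound i)
      _ = (k - d + t) * n := by
          rw [Finset.sum_const, Finset.card_univ, Fintype.card_fin, smul_eq_mul, mul_comm]
  · -- backward direction: construction
    intro hcond
    have hm0 : 0 < m := by omega
    let c0 : Fin m := ⟨0, hm0⟩
    set le : Fin m → Fin m → Bool := fun c c' => decide ((C c).card ≤ (C c').card) with hle
    set cs : List (Fin m) := Finset.univ.toList.mergeSort le with hcs
    have hperm : cs.Perm Finset.univ.toList := List.mergeSort_perm _ _
    have hlen : cs.length = m := by
      rw [hperm.length_eq, Finset.length_toList, Finset.card_univ, Fintype.card_fin]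
    have hnd : cs.Nodup := hperm.nodup_iff.mpr Finset.univ.nodup_toList
    have hmemcs : ∀ c : Fin m, c ∈ cs := fun c =>
      hperm.mem_iff.mpr (Finset.mem_toList.mpr (Finset.mem_univ c))
    have hpair : List.Pairwise (fun a b => le a b = true) cs := by
      apply List.pairwise_mergeSort
      · intro a b c hab hbc
        simp only [hle, decide_eq_true_eq] at *
        omega
      · intro a b
        simp only [hle, Bool.or_eq_true, decide_eq_true_eq]
        omega
    set aa : ℕ → ℕ := fun i => (C (cs.getD i c0)).card with haa
    have hsorted : ∀ q q' : ℕ, q ≤ q' → q' < m → aa q ≤ aa q' := by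
      intro q q' hqq hq'
      rcases eq_or_lt_of_le hqq with rfl | h
      · exact le_rfl
      · have hq'l : q' < cs.length := by omega
        have hql : q < cs.length := by omega
        have := List.pairwise_iff_get.mp hpair ⟨q, hql⟩ ⟨q', hq'l⟩ h
        simp only [hle, decide_eq_true_eq] at this
        simpa only [haa, List.getD_eq_get _ _ ⟨_, hql⟩, List.getD_eq_get _ _ ⟨_, hq'l⟩] using this
    set L : List α := cs.flatMap (fun c => (C c).toList) with hL
    have hsum_cs : (cs.map (fun c => (C c).card)).sum = k * n := by
      rw [(hperm.map _).sum_eq, Finset.sum_map_toList,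
        ← Finset.card_biUnion (fun x _ y _ hxy => hdisj x y hxy), hunion, hcard]
    have hLlen : L.length = k * n := by
      rw [hL, List.length_flatMap, ← hsum_cs]
      congr 1
      apply List.map_congr_left
      intro c _
      simp [Finset.length_toList]
    have hLnd : L.Nodup := by
      rw [hL, List.nodup_flatMap]
      refine ⟨fun c _ => (C c).nodup_toList, ?_⟩
      apply hnd.imp
      intro a b hne x hxa hxb
      exact (Finset.disjoint_left.mp (hdisj a b hne) (Finset.mem_toList.mp hxa))
        (Finset.mem_toList.mp hxb)
    have hLmem : ∀ x, x ∈ L ↔ x ∈ X := by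
      intro x
      rw [hL, List.mem_flatMap, ← hunion]
      constructor
      · rintro ⟨c, _, hx⟩
        exact Finset.mem_biUnion.mpr ⟨c, Finset.mem_univ c, Finset.mem_toList.mp hx⟩
      · intro hx
        obtain ⟨c, _, hxc⟩ := Finset.mem_biUnion.mp hx
        exact ⟨c, hmemcs c, Finset.mem_toList.mpr hxc⟩
    set f : ℕ → α := fun p => L.getD p x₀ with hf
    have hfinj : ∀ p p', p < k * n → p' < k * n → f p = f p' → p = p' := by
      intro p p' hp hp' he
      have hp1 : p < L.length := by rw [hLlen]; exact hp
      have hp2 : p' < L.length := by rw [hLlen]; exact hp'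
      simp only [hf, List.getD_eq_get _ _ ⟨_, hp1⟩, List.getD_eq_get _ _ ⟨_, hp2⟩] at he
      have := hLnd.get_inj_iff.mp he
      simpa using congrArg Fin.val this
    have hfmem : ∀ p, p < k * n → f p ∈ X := by
      intro p hp
      have hp1 : p < L.length := by rw [hLlen]; exact hp
      have hge : f p = L.get ⟨p, hp1⟩ := List.getD_eq_get _ _ ⟨_, hp1⟩
      rw [hge]
      exact (hLmem _).mp (List.get_mem _ _)
    set P : Fin n → Finset α := fun j => (Finset.range k).image (fun l => f (l * n + (j : ℕ)))
      with hP
    have hidx : ∀ (l : ℕ) (j : Fin n), l < k → l * n + (j : ℕ) < k * n := by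
      intro l j hl
      have hj : (j : ℕ) < n := j.isLt
      have h1 : (l + 1) * n ≤ k * n := Nat.mul_le_mul_right n (by omega)
      have h2 : (l + 1) * n = l * n + n := by ring
      omega
    have hPcards : ∀ j, (P j).card = k := by
      intro j
      rw [hP, Finset.card_image_of_injOn, Finset.card_range]
      intro l hl l' hl' he
      simp only [Finset.coe_range, Set.mem_Iio] at hl hl'
      have heq := hfinj _ _ (hidx l j hl) (hidx l' j hl') he
      have h2 : l * n = l' * n := by omega
      exact Nat.eq_of_mul_eq_mul_right hn0 h2
    have hPdisjs : ∀ i j : Fin n, i ≠ j → Disjoint (P i) (P j) := by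
      intro i j hne
      rw [Finset.disjoint_left]
      intro x hxi hxj
      obtain ⟨l, hl, hfl⟩ := Finset.mem_image.mp hxi
      obtain ⟨l', hl', hfl'⟩ := Finset.mem_image.mp hxj
      rw [Finset.mem_range] at hl hl'
      have heq := hfinj _ _ (hidx l i hl) (hidx l' j hl') (by rw [hfl, hfl'])
      apply hne
      have hi : (i : ℕ) < n := i.isLt
      have hj : (j : ℕ) < n := j.isLt
      have hmi : (l * n + (i : ℕ)) % n = (i : ℕ) := by
        rw [add_comm (l * n) ((i : ℕ)), Nat.add_mul_mod_self_right]
        exact Nat.mod_eq_of_lt hi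
      have hmj : (l' * n + (j : ℕ)) % n = (j : ℕ) := by
        rw [add_comm (l' * n) ((j : ℕ)), Nat.add_mul_mod_self_right]
        exact Nat.mod_eq_of_lt hj
      apply Fin.ext
      rw [← hmi, ← hmj, heq]
    have hPunions : Finset.univ.biUnion P = X := by
      apply Finset.ext
      intro x
      constructor
      · intro hx
        obtain ⟨j, _, hxj⟩ := Finset.mem_biUnion.mp hx
        obtain ⟨l, hl, hfl⟩ := Finset.mem_image.mp hxj
        rw [Finset.mem_range] at hl
        rw [← hfl]
        exact hfmem _ (hidx l j hl)
      · intro hx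
        have hxL : x ∈ L := (hLmem x).mpr hx
        obtain ⟨⟨p, hpl⟩, hget⟩ := List.mem_iff_get.mp hxL
        have hpkn : p < k * n := by rw [← hLlen]; exact hpl
        have hjlt : p % n < n := Nat.mod_lt _ hn0
        refine Finset.mem_biUnion.mpr ⟨⟨p % n, hjlt⟩, Finset.mem_univ _, ?_⟩
        refine Finset.mem_image.mpr ⟨p / n, Finset.mem_range.mpr ?_, ?_⟩
        · rw [Nat.div_lt_iff_lt_mul hn0]; exact hpkn
        · show f (p / n * n + ((⟨p % n, hjlt⟩ : Fin n) : ℕ)) = x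
          have hdm := Nat.div_add_mod p n
          have hv : ((⟨p % n, hjlt⟩ : Fin n) : ℕ) = p % n := rfl
          have hpe : p / n * n + (p % n) = p := by rw [mul_comm]; exact hdm
          rw [hv, hpe]
          have hge : f p = L.get ⟨p, hpl⟩ := List.getD_eq_get _ _ ⟨_, hpl⟩
          rw [hge]
          exact hget
    -- block structure
    set start : ℕ → ℕ := fun q => ∑ i ∈ Finset.range q, aa i with hstart
    have hstart_mono : ∀ q q', q ≤ q' → start q ≤ start q' := fun q q' h =>
      Finset.sum_le_sum_of_subset (Finset.range_subset_range.mpr h)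
    have hstart_succ : ∀ q, start (q + 1) = start q + aa q := fun q => Finset.sum_range_succ aa q
    have hstart_m : start m = k * n := by
      have e1 : ((cs.take m).map (fun c => (C c).card)).sum = start m :=
        take_map_sum_eq (fun c => (C c).card) c0 cs m (by omega)
      rw [← e1, List.take_of_length_le (by omega), hsum_cs]
    have hblock : ∀ p, p < k * n →
        ∃ q, q < m ∧ start q ≤ p ∧ p < start q + aa q ∧ f p ∈ C (cs.getD q c0) := by
      intro p hp
      have hpL : p < (cs.flatMap (fun c => (C c).toList)).length := by
        show p < L.length
        rw [hLlen]; exact hp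
      obtain ⟨q, hq, h1, h2, h3⟩ := mem_block_aux (fun c => (C c).toList) x₀ cs p hpL
      have hqm : q < m := by omega
      have hconv : ((cs.take q).map fun c => ((C c).toList).length).sum = start q := by
        rw [take_map_sum_eq _ c0 cs q (by omega), hstart]
        apply Finset.sum_congr rfl
        intro i _
        simp [haa, Finset.length_toList]
      have hgete : cs.get ⟨q, hq⟩ = cs.getD q c0 := (List.getD_eq_get _ _ ⟨_, hq⟩).symm
      refine ⟨q, hqm, ?_, ?_, ?_⟩
      · rw [← hconv]; exact h1
      · rw [← hconv]
        have : ((C (cs.getD q c0)).toList).length = aa q := by simp [haa, Finset.length_toList]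
        rw [← this, ← hgete]
        exact h2
      · rw [← hgete]
        exact Finset.mem_toList.mp h3
    have hbunique : ∀ p q q', q < m → q' < m → start q ≤ p → p < start q + aa q →
        start q' ≤ p → p < start q' + aa q' → q = q' := by
      intro p q q' hq hq' h1 h2 h1' h2'
      by_contra hne
      rcases Nat.lt_or_ge q q' with h | h
      · have := hstart_mono (q + 1) q' h
        rw [hstart_succ] at this
        omega
      · have hlt : q' < q := by omega
        have := hstart_mono (q' + 1) q hlt
        rw [hstart_succ] at this
        omega
    have hblock_mem : ∀ q, q < m → ∀ p, start q ≤ p → p < start q + aa q →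
        f p ∈ C (cs.getD q c0) := by
      intro q hq p h1 h2
      have hpk : p < k * n := by
        have e1 : start q + aa q = start (q + 1) := (hstart_succ q).symm
        have e2 : start (q + 1) ≤ start m := hstart_mono _ _ (by omega)
        omega
      obtain ⟨q', hq', g1, g2, g3⟩ := hblock p hpk
      have he : q' = q := hbunique p q' q hq' hq g1 g2 h1 h2
      rw [← he]
      exact g3
    have hidxof : ∀ c : Fin m, ∃ q, q < m ∧ cs.getD q c0 = c := by
      intro c
      obtain ⟨⟨q, hq⟩, hget⟩ := List.mem_iff_get.mp (hmemcs c)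
      exact ⟨q, by omega, by rw [List.getD_eq_get _ _ ⟨_, hq⟩]; exact hget⟩
    have hgetD_inj : ∀ q q', q < m → q' < m → cs.getD q c0 = cs.getD q' c0 → q = q' := by
      intro q q' hq hq' he
      have hql : q < cs.length := by omega
      have hq'l : q' < cs.length := by omega
      rw [List.getD_eq_get _ _ ⟨_, hql⟩, List.getD_eq_get _ _ ⟨_, hq'l⟩] at he
      simpa using congrArg Fin.val (hnd.get_inj_iff.mp he)
    -- colorfulness
    have hPcolor : ∀ j : Fin n,
        d ≤ (Finset.univ.filter (fun c : Fin m => ((P j) ∩ C c).Nonempty)).card := by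
      intro j
      have hj : (j : ℕ) < n := j.isLt
      set T := Finset.univ.filter (fun c : Fin m => ((P j) ∩ C c).Nonempty) with hT
      set Big := Finset.univ.filter (fun c : Fin m => n ≤ (C c).card) with hBig
      set g := Big.card with hg
      have hmemP : ∀ l : ℕ, l < k → f (l * n + (j : ℕ)) ∈ P j := by
        intro l hl
        exact Finset.mem_image.mpr ⟨l, Finset.mem_range.mpr hl, rfl⟩
      have hinT : ∀ (l : ℕ) (c : Fin m), l < k → f (l * n + (j : ℕ)) ∈ C c → c ∈ T := by
        intro l c hl hfc
        exact Finset.mem_filter.mpr ⟨Finset.mem_univ c,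
          ⟨f (l * n + (j : ℕ)), Finset.mem_inter.mpr ⟨hmemP l hl, hfc⟩⟩⟩
      have hBigT : Big ⊆ T := by
        intro c hc
        have hcn : n ≤ (C c).card := (Finset.mem_filter.mp hc).2
        obtain ⟨q, hq, hqc⟩ := hidxof c
        have haaq : aa q = (C c).card := by
          show (C (cs.getD q c0)).card = (C c).card
          rw [hqc]
        obtain ⟨l, hl1, hl2⟩ := exists_col_in_window (start q) n (j : ℕ) hn0 hj
        have hpb : l * n + (j : ℕ) < start q + aa q := by omega
        have hpkn : l * n + (j : ℕ) < k * n := by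
          have e2 : start (q + 1) ≤ start m := hstart_mono _ _ (by omega)
          have e1 := hstart_succ q
          omega
        have hlk : l < k := by
          have hmul : l * n < k * n := by omega
          exact Nat.lt_of_mul_lt_mul_right hmul
        have hfp : f (l * n + (j : ℕ)) ∈ C c := by
          rw [← hqc]
          exact hblock_mem q hq _ hl1 hpb
        exact hinT l c hlk hfp
      rcases le_or_gt d g with hdg | hgd
      · exact le_trans hdg (le_trans (le_of_eq hg) (Finset.card_le_card hBigT))
      · set bigQ := (Finset.range m).filter (fun q => n ≤ aa q) with hbigQ
        have hcardbij : bigQ.card = Big.card := by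
          apply Finset.card_bij (fun q _ => cs.getD q c0)
          · intro q hq
            obtain ⟨hqm, hqn⟩ := Finset.mem_filter.mp hq
            exact Finset.mem_filter.mpr ⟨Finset.mem_univ _, hqn⟩
          · intro q hq q' hq' he
            obtain ⟨hqm, _⟩ := Finset.mem_filter.mp hq
            obtain ⟨hq'm, _⟩ := Finset.mem_filter.mp hq'
            rw [Finset.mem_range] at hqm hq'm
            exact hgetD_inj q q' hqm hq'm he
          · intro c hc
            obtain ⟨q, hqm, hqc⟩ := hidxof c
            have hqbig : q ∈ bigQ := by
              refine Finset.mem_filter.mpr ⟨Finset.mem_range.mpr hqm, ?_⟩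
              show n ≤ (C (cs.getD q c0)).card
              rw [hqc]
              exact (Finset.mem_filter.mp hc).2
            exact ⟨q, hqbig, hqc⟩
        have hsumbij : ∑ q ∈ bigQ, aa q = ∑ c ∈ Big, (C c).card := by
          apply Finset.sum_bij (fun q _ => cs.getD q c0)
          · intro q hq
            obtain ⟨hqm, hqn⟩ := Finset.mem_filter.mp hq
            exact Finset.mem_filter.mpr ⟨Finset.mem_univ _, hqn⟩
          · intro q hq q' hq' he
            obtain ⟨hqm, _⟩ := Finset.mem_filter.mp hq
            obtain ⟨hq'm, _⟩ := Finset.mem_filter.mp hq'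
            rw [Finset.mem_range] at hqm hq'm
            exact hgetD_inj q q' hqm hq'm he
          · intro c hc
            obtain ⟨q, hqm, hqc⟩ := hidxof c
            have hqbig : q ∈ bigQ := by
              refine Finset.mem_filter.mpr ⟨Finset.mem_range.mpr hqm, ?_⟩
              show n ≤ (C (cs.getD q c0)).card
              rw [hqc]
              exact (Finset.mem_filter.mp hc).2
            exact ⟨q, hqbig, hqc⟩
          · intro q hq
            rfl
        have hgm : g ≤ m := by
          rw [hg, hBig]
          calc (Finset.univ.filter (fun c : Fin m => n ≤ (C c).card)).card
              ≤ Finset.univ.card := Finset.card_le_card (Finset.filter_subset _ _)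
            _ = m := by rw [Finset.card_univ, Fintype.card_fin]
        set b := ∑ c ∈ Big, (C c).card with hb
        have hbcond : b ≤ (k - d + g) * n := by
          rcases Nat.eq_zero_or_pos g with h0 | h1
          · have hBige : Big = ∅ := Finset.card_eq_zero.mp (by omega)
            rw [hb, hBige, Finset.sum_empty]
            exact Nat.zero_le _
          · exact hcond g h1 (by omega) Big hg.symm
        have hbigQeq : bigQ = Finset.Ico (m - g) m := by
          have hup : ∀ q ∈ bigQ, m - g ≤ q ∧ q < m := by
            intro q hq
            obtain ⟨hqm, hqn⟩ := Finset.mem_filter.mp hq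
            rw [Finset.mem_range] at hqm
            refine ⟨?_, hqm⟩
            by_contra hlt
            push_neg at hlt
            have hsub : Finset.Ico q m ⊆ bigQ := by
              intro q' hq'
              rw [Finset.mem_Ico] at hq'
              exact Finset.mem_filter.mpr ⟨Finset.mem_range.mpr hq'.2,
                le_trans hqn (hsorted q q' hq'.1 hq'.2)⟩
            have hcc := Finset.card_le_card hsub
            rw [Nat.card_Ico, hcardbij, ← hg] at hcc
            omega
          apply Finset.eq_of_subset_of_card_le
          · intro q hq
            exact Finset.mem_Ico.mpr (hup q hq)
          · rw [Nat.card_Ico, hcardbij, ← hg]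
            omega
        have hstart_b : start (m - g) + b = k * n := by
          have e1 : ∑ q ∈ Finset.Ico 0 (m - g), aa q + ∑ q ∈ Finset.Ico (m - g) m, aa q
              = ∑ q ∈ Finset.Ico 0 m, aa q :=
            Finset.sum_Ico_consecutive aa (Nat.zero_le _) (Nat.sub_le m g)
          have e2 : ∑ q ∈ Finset.Ico (m - g) m, aa q = b := by
            rw [← hbigQeq, hsumbij, hb]
          have e3 : start (m - g) = ∑ q ∈ Finset.Ico 0 (m - g), aa q := by
            show (∑ i ∈ Finset.range (m - g), aa i) = _
            rw [Finset.range_eq_Ico]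
          have e4 : start m = ∑ q ∈ Finset.Ico 0 m, aa q := by
            show (∑ i ∈ Finset.range m, aa i) = _
            rw [Finset.range_eq_Ico]
          omega
        set S := (Finset.range k).filter (fun l => k * n ≤ l * n + (j : ℕ) + b) with hS
        have hScard : S.card ≤ k - d + g := by
          have hcle : S.card ≤ (Finset.range (k - d + g)).card := by
            apply Finset.card_le_card_of_injOn (fun l => k - 1 - l)
            · intro l hl
              obtain ⟨hlk, hlb⟩ := Finset.mem_filter.mp hl
              rw [Finset.mem_range] at hlk
              simp only [Finset.mem_coe, Finset.mem_range]
              have hsm : (l + 1) * n = l * n + n := by ring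
              rcases Nat.lt_or_ge (l + 1) k with hc | hc
              · have e : (k - 1 - l) * n + (l + 1) * n = k * n := by
                  rw [← Nat.add_mul]
                  congr 1
                  omega
                have e2 : (k - 1 - l) * n < b := by omega
                have e4 : (k - 1 - l) * n < (k - d + g) * n := lt_of_lt_of_le e2 hbcond
                exact Nat.lt_of_mul_lt_mul_right e4
              · have hz : k - 1 - l = 0 := by omega
                rw [hz]
                by_contra h0
                push_neg at h0
                have hzero : k - d + g = 0 := by omega
                rw [hzero, zero_mul] at hbcond
                have hb0 : b = 0 := by omega
                have hle2 : (l + 1) * n ≤ k * n := Nat.mul_le_mul_right n (by omega)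
                omega
            · intro l hl l' hl' he
              have h1 := Finset.mem_range.mp (Finset.mem_filter.mp (Finset.mem_coe.mp hl)).1
              have h2 := Finset.mem_range.mp (Finset.mem_filter.mp (Finset.mem_coe.mp hl')).1
              have he' : k - 1 - l = k - 1 - l' := he
              omega
          rwa [Finset.card_range] at hcle
        set F : ℕ → Fin m := fun l =>
          if h : ∃ c : Fin m, f (l * n + (j : ℕ)) ∈ C c then h.choose else c0 with hF
        have hsmall : ∀ l ∈ Finset.range k \ S, F l ∈ T \ Big ∧
            ∃ q, q < m ∧ ¬ (n ≤ aa q) ∧ start q ≤ l * n + (j : ℕ) ∧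
              l * n + (j : ℕ) < start q + aa q ∧ F l = cs.getD q c0 := by
          intro l hl
          obtain ⟨hlr, hlS⟩ := Finset.mem_sdiff.mp hl
          rw [Finset.mem_range] at hlr
          have hlb : ¬ (k * n ≤ l * n + (j : ℕ) + b) := by
            intro hcon
            exact hlS (Finset.mem_filter.mpr ⟨Finset.mem_range.mpr hlr, hcon⟩)
          push_neg at hlb
          have hpkn : l * n + (j : ℕ) < k * n := hidx l j hlr
          obtain ⟨q, hqm, h1, h2, h3⟩ := hblock _ hpkn
          have hqsm : q < m - g := by
            by_contra hge
            push_neg at hge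
            have hmo := hstart_mono (m - g) q hge
            omega
          have hqnb : ¬ (n ≤ aa q) := by
            intro hnq
            have hqb : q ∈ bigQ := Finset.mem_filter.mpr ⟨Finset.mem_range.mpr hqm, hnq⟩
            rw [hbigQeq, Finset.mem_Ico] at hqb
            omega
          have hex : ∃ c : Fin m, f (l * n + (j : ℕ)) ∈ C c := ⟨_, h3⟩
          have hFl : F l = cs.getD q c0 := by
            show (if h : ∃ c : Fin m, f (l * n + (j : ℕ)) ∈ C c then h.choose else c0) = _
            rw [dif_pos hex]
            exact hcolu _ _ _ hex.choose_spec h3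
          refine ⟨Finset.mem_sdiff.mpr ⟨?_, ?_⟩, q, hqm, hqnb, h1, h2, hFl⟩
          · exact hinT l (F l) hlr (by rw [hFl]; exact h3)
          · intro hcon
            rw [hFl] at hcon
            exact hqnb ((Finset.mem_filter.mp hcon).2)
        have hcount : (Finset.range k \ S).card ≤ (T \ Big).card := by
          apply Finset.card_le_card_of_injOn F (fun l hl => (hsmall l hl).1)
          intro l hl l' hl' he
          have hl1 := Finset.mem_coe.mp hl
          have hl2 := Finset.mem_coe.mp hl'
          obtain ⟨_, q, hqm, hqn, h1, h2, hFl⟩ := hsmall l hl1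
          obtain ⟨_, q', hq'm, hq'n, h1', h2', hFl'⟩ := hsmall l' hl2
          have hqq : q = q' := hgetD_inj q q' hqm hq'm (by rw [← hFl, ← hFl', he])
          subst hqq
          by_contra hne
          have hkey : ∀ a a' : ℕ, a < a' → start q ≤ a * n + (j : ℕ) →
              a' * n + (j : ℕ) < start q + aa q → False := by
            intro a a' haa' g1 g2
            have hmm : (a + 1) * n ≤ a' * n := Nat.mul_le_mul_right n (by omega)
            have hsm : (a + 1) * n = a * n + n := by ring
            omega
          rcases Nat.lt_or_ge l l' with hc | hc
          · exact hkey l l' hc h1 h2'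
          · exact hkey l' l (by omega) h1' h2
        have hsplitS : (Finset.range k \ S).card + S.card = k := by
          rw [Finset.card_sdiff_add_card_eq_card (Finset.filter_subset _ _), Finset.card_range]
        have hTsplit := Finset.card_inter_add_card_sdiff T Big
        have hTBig : T ∩ Big = Big := Finset.inter_eq_right.mpr hBigT
        rw [hTBig] at hTsplit
        omega
    exact ⟨P, hPdisjs, hPunions, hPcards, hPcolor⟩
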